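/- Let K ⊆ ℝ^d be a convex body whose affine hull has dimension d' ≤ d, with centroid c, and let R₁, …, Rₙ ∈ ℝ^d. Assuming Grünbaum's inequality in dimension d', for every i the relative volume of {x ∈ K : ⟨x, Rᵢ⟩ ≥ ⟨c, Rᵢ⟩} within K is at least (d'/(d'+1))^{d'} ≥ 1/e. In particular, the centroid is simultaneously in the top (1 − (d'/(d'+1))^{d'})-quantile... equivalently is a (d'/(d'+1))^{d'}-quantile fair point for all n linear objectives simultaneously. -/

import Mathlib

open MeasureTheory RealInnerProductSpace
open ENNReal Set

set_option maxHeartbeats 1000000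

theorem centroid_quantile_fair {d d' n : ℕ}
    (K : Set (EuclideanSpace ℝ (Fin d)))
    (hK : IsCompact K) (hKc : Convex ℝ K) (hKne : K.Nonempty)
    (hd' : d' ≤ d)
    (hdim : Module.finrank ℝ (affineSpan ℝ K).direction = d')
    (c : EuclideanSpace ℝ (Fin d))
    (hc : c = (μH[(d' : ℝ)] K).toReal⁻¹ • ∫ x in K, x ∂μH[(d' : ℝ)])
    (R : Fin n → EuclideanSpace ℝ (Fin d))
    (hGrun : ∀ P : Set (EuclideanSpace ℝ (Fin d')), IsCompact P → Convex ℝ P →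
      (interior P).Nonempty → ∀ w : EuclideanSpace ℝ (Fin d'), w ≠ 0 →
      ∀ c' : EuclideanSpace ℝ (Fin d'), c' = (volume P).toReal⁻¹ • ∫ x in P, x →
      ENNReal.ofReal (((d' : ℝ) / (d' + 1)) ^ d') * volume P
        ≤ volume (P ∩ {x | 0 ≤ ⟪w, x - c'⟫})) :
    (∀ i, ENNReal.ofReal (((d' : ℝ) / (d' + 1)) ^ d') * μH[(d' : ℝ)] K
        ≤ μH[(d' : ℝ)] {x ∈ K | ⟪c, R i⟫ ≤ ⟪x, R i⟫}) ∧
    (∀ i, ENNReal.ofReal (((d' : ℝ) / (d' + 1)) ^ d') * μH[(d' : ℝ)] K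
        ≤ μH[(d' : ℝ)] {x ∈ K | ⟪x, R i⟫ ≤ ⟪c, R i⟫}) ∧
    1 / Real.exp 1 ≤ ((d' : ℝ) / (d' + 1)) ^ d' := by
  have hexp : 1 / Real.exp 1 ≤ ((d' : ℝ) / (d' + 1)) ^ d' := by
    rcases Nat.eq_zero_or_pos d' with h | h
    · rw [h, pow_zero, div_le_one (Real.exp_pos 1)]
      exact Real.one_le_exp (by norm_num)
    · have hm : (0:ℝ) < d' := by exact_mod_cast h
      have h1 : ((d':ℝ)/(d'+1))^d' = (((d'+1:ℝ)/d')^d')⁻¹ := by rw [← inv_pow, inv_div]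
      rw [h1, one_div, inv_le_inv₀ (Real.exp_pos 1) (by positivity)]
      have h2 : ((d':ℝ)+1)/d' = 1 + 1/d' := by field_simp
      rw [h2]
      calc (1 + 1/(d':ℝ))^d' ≤ (Real.exp (1/d'))^d' := by
            apply pow_le_pow_left₀ (by positivity)
            rw [add_comm]
            exact Real.add_one_le_exp _
        _ = Real.exp 1 := by rw [← Real.exp_nat_mul]; congr 1; field_simp
  have hq1 : ENNReal.ofReal (((d' : ℝ) / (d' + 1)) ^ d') ≤ 1 := by
    rw [ENNReal.ofReal_le_one]
    apply pow_le_one₀ (by positivity)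
    rw [div_le_one (by positivity)]
    linarith
  obtain ⟨p₀, hp₀⟩ := hKne
  set E := (affineSpan ℝ K).direction with hE
  haveI : FiniteDimensional ℝ E := inferInstance
  set L : E ≃ₗᵢ[ℝ] EuclideanSpace ℝ (Fin d') :=
    ((stdOrthonormalBasis ℝ E).reindex (finCongr hdim)).repr with hL
  set g : EuclideanSpace ℝ (Fin d') → EuclideanSpace ℝ (Fin d) :=
    fun y => p₀ + (L.symm y : EuclideanSpace ℝ (Fin d)) with hg
  have hg_isom : Isometry g := by
    apply Isometry.of_dist_eq
    intro y z
    simp only [hg, dist_add_left]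
    exact (E.subtypeₗᵢ.isometry.dist_eq _ _).trans (L.symm.isometry.dist_eq y z)
  have hmemE : ∀ x ∈ K, x - p₀ ∈ E :=
    fun x hx => AffineSubspace.vsub_mem_direction (subset_affineSpan ℝ K hx) (subset_affineSpan ℝ K hp₀)
  have hrange : K ⊆ Set.range g := by
    intro x hx
    exact ⟨L ⟨x - p₀, hmemE x hx⟩, by simp [hg]⟩
  set P : Set (EuclideanSpace ℝ (Fin d')) := g ⁻¹' K with hPdef
  have hgP : g '' P = K := Set.image_preimage_eq_of_subset hrange
  have hg_affine : ∀ (a b : ℝ) (y z : EuclideanSpace ℝ (Fin d')), a + b = 1 →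
      g (a • y + b • z) = a • g y + b • g z := by
    intro a b y z hab
    have h1 : (L.symm (a • y + b • z) : EuclideanSpace ℝ (Fin d))
        = a • (L.symm y : EuclideanSpace ℝ (Fin d)) + b • (L.symm z : EuclideanSpace ℝ (Fin d)) := by
      rw [map_add, _root_.map_smul, _root_.map_smul]; rfl
    calc g (a • y + b • z) = (a + b) • p₀ + (a • (L.symm y : EuclideanSpace ℝ (Fin d))
          + b • (L.symm z : EuclideanSpace ℝ (Fin d))) := by rw [hab, one_smul]; exact congrArg (p₀ + ·) h1
    _ = a • g y + b • g z := by simp only [hg]; module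
  have hPconv : Convex ℝ P := by
    intro y hy z hz a b ha hb hab
    have : g (a • y + b • z) ∈ K := by
      rw [hg_affine a b y z hab]
      exact hKc hy hz ha hb hab
    exact this
  have hPcomp : IsCompact P := by
    apply Metric.isCompact_of_isClosed_isBounded
    · exact hK.isClosed.preimage hg_isom.continuous
    · obtain ⟨C, hC⟩ := Metric.isBounded_iff.1 hK.isBounded
      apply Metric.isBounded_iff.2 ⟨C, ?_⟩
      intro y hy z hz
      rw [← hg_isom.dist_eq y z]
      exact hC (hy : g y ∈ K) (hz : g z ∈ K)
  have hP0 : (0 : EuclideanSpace ℝ (Fin d')) ∈ P := by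
    show g 0 ∈ K
    simp only [hg, map_zero, Submodule.coe_zero, add_zero]
    exact hp₀
  have hvsK : vectorSpan ℝ K = E := (direction_affineSpan ℝ K).symm
  have hkey : Submodule.map (E.subtype ∘ₗ (L.symm.toLinearEquiv : EuclideanSpace ℝ (Fin d') ≃ₗ[ℝ] E).toLinearMap)
      (vectorSpan ℝ P) = E := by
    have himg : (⇑(E.subtype ∘ₗ (L.symm.toLinearEquiv : EuclideanSpace ℝ (Fin d') ≃ₗ[ℝ] E).toLinearMap)) '' (P -ᵥ P) = K -ᵥ K := by
      ext v
      constructor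
      · rintro ⟨u, ⟨y, hy, z, hz, rfl⟩, rfl⟩
        refine ⟨g y, hy, g z, hz, ?_⟩
        simp only [hg, vsub_eq_sub, LinearMap.coe_comp, Function.comp_apply,
          LinearEquiv.coe_coe, LinearIsometryEquiv.coe_toLinearEquiv, Submodule.coe_subtype, map_sub]
        push_cast
        abel
      · rintro ⟨x, hx, x', hx', rfl⟩
        obtain ⟨y, hy, rfl⟩ : ∃ y ∈ P, g y = x := by
          rw [← hgP] at hx; obtain ⟨y, hy, rfl⟩ := hx; exact ⟨y, hy, rfl⟩
        obtain ⟨z, hz, rfl⟩ : ∃ z ∈ P, g z = x' := by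
          rw [← hgP] at hx'; obtain ⟨z, hz, rfl⟩ := hx'; exact ⟨z, hz, rfl⟩
        refine ⟨y - z, Set.vsub_mem_vsub hy hz, ?_⟩
        simp only [hg, LinearMap.coe_comp, Function.comp_apply, LinearEquiv.coe_coe,
          LinearIsometryEquiv.coe_toLinearEquiv, Submodule.coe_subtype, map_sub, vsub_eq_sub]
        push_cast
        abel
    rw [vectorSpan_def, Submodule.map_span, himg, ← vectorSpan_def, hvsK]
  have hvsP : vectorSpan ℝ P = ⊤ := by
    apply Submodule.eq_top_of_finrank_eq
    have h2 : Submodule.map E.subtype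
        (Submodule.map (L.symm.toLinearEquiv : EuclideanSpace ℝ (Fin d') ≃ₗ[ℝ] E).toLinearMap (vectorSpan ℝ P)) = E := by
      rw [Submodule.map_comp] at hkey; exact hkey
    have h3 := Submodule.finrank_map_subtype_eq E
      (Submodule.map (L.symm.toLinearEquiv : EuclideanSpace ℝ (Fin d') ≃ₗ[ℝ] E).toLinearMap (vectorSpan ℝ P))
    rw [h2] at h3
    have h4 := LinearEquiv.finrank_map_eq (L.symm.toLinearEquiv) (vectorSpan ℝ P)
    rw [← h4, ← h3, hdim, finrank_euclideanSpace_fin]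
  have hspanP : affineSpan ℝ P = ⊤ :=
    (AffineSubspace.affineSpan_eq_top_iff_vectorSpan_eq_top_of_nonempty ℝ _ _ ⟨0, hP0⟩).2 hvsP
  have hPint : (interior P).Nonempty :=
    (hPconv.interior_nonempty_iff_affineSpan_eq_top).2 hspanP
  obtain ⟨κ, hκ0, hμH⟩ : ∃ κ : NNReal, κ ≠ 0 ∧
      (μH[(d' : ℝ)] : Measure (EuclideanSpace ℝ (Fin d'))) = (κ : ℝ≥0∞) • volume := by
    have h : ((d' : ℝ)) = ((Module.finrank ℝ (EuclideanSpace ℝ (Fin d')) : ℕ) : ℝ) := by simp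
    rw [h]
    refine ⟨_, ?_, Measure.isAddLeftInvariant_eq_smul _ volume⟩
    exact (Measure.addHaarScalarFactor_pos_of_isAddHaarMeasure _ _).ne'
  have hmap : ∀ T : Set (EuclideanSpace ℝ (Fin d)),
      μH[(d' : ℝ)] (K ∩ T) = (κ : ℝ≥0∞) * volume (P ∩ g ⁻¹' T) := by
    intro T
    have h1 : g '' (P ∩ g ⁻¹' T) = K ∩ T := by rw [Set.image_inter_preimage, hgP]
    rw [← h1, hg_isom.hausdorffMeasure_image (Or.inl (Nat.cast_nonneg d')), hμH,
      Measure.smul_apply, smul_eq_mul]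
  have hμHK : μH[(d' : ℝ)] K = (κ : ℝ≥0∞) * volume P := by
    simpa using hmap Set.univ
  have hrestrict : μH[(d' : ℝ)].restrict K
      = Measure.map g ((κ : ℝ≥0∞) • volume.restrict P) := by
    ext T hT
    rw [Measure.restrict_apply hT, Measure.map_apply hg_isom.continuous.measurable hT,
      Measure.smul_apply, Measure.restrict_apply (hT.preimage hg_isom.continuous.measurable),
      smul_eq_mul, Set.inter_comm T K, hmap T, Set.inter_comm]
  by_cases hPne : volume P = 0
  · have hK0 : μH[(d' : ℝ)] K = 0 := by rw [hμHK, hPne, mul_zero]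
    exact ⟨fun i => by rw [hK0, mul_zero]; exact bot_le,
      fun i => by rw [hK0, mul_zero]; exact bot_le, hexp⟩
  have hPfin : volume P ≠ ⊤ := hPcomp.measure_lt_top.ne
  set clin : EuclideanSpace ℝ (Fin d') →L[ℝ] EuclideanSpace ℝ (Fin d) :=
    E.subtypeL.comp L.symm.toLinearIsometry.toContinuousLinearMap with hclin
  have hgclin : ∀ y, g y = p₀ + clin y := fun y => rfl
  have hInt : IntegrableOn (fun y => y) P volume :=
    continuous_id.continuousOn.integrableOn_compact hPcomp
  have h5 : ∫ y in P, g y = (volume P).toReal • p₀ + clin (∫ y in P, y) := by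
    calc ∫ y in P, g y = ∫ y in P, (p₀ + clin y) := rfl
      _ = (∫ _ in P, p₀) + ∫ y in P, clin y :=
          integral_add (integrableOn_const hPcomp.measure_lt_top.ne)
            (clin.integrable_comp hInt)
      _ = (volume P).toReal • p₀ + clin (∫ y in P, y) := by
          rw [setIntegral_const, clin.integral_comp_comm hInt]; rfl
  have h6 : ∫ x in K, x ∂μH[(d' : ℝ)] = (κ : ℝ≥0∞).toReal • ∫ y in P, g y := by
    rw [show (∫ x in K, x ∂μH[(d' : ℝ)]) = ∫ x, x ∂(μH[(d' : ℝ)].restrict K) from rfl,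
      hrestrict, integral_map (f := fun x => x) hg_isom.continuous.measurable.aemeasurable
        aestronglyMeasurable_id, integral_smul_measure]
  have hbne : (volume P).toReal ≠ 0 := ENNReal.toReal_ne_zero.2 ⟨hPne, hPfin⟩
  have hane : ((κ : ℝ≥0∞)).toReal ≠ 0 := by simp [hκ0]
  set c' : EuclideanSpace ℝ (Fin d') := (volume P).toReal⁻¹ • ∫ y in P, y with hc'def
  have hgc : g c' = c := by
    rw [hc, hμHK, h6, h5, ENNReal.toReal_mul, hgclin, clin.map_smul]
    match_scalars <;> field_simp
  have key : ∀ Rv : EuclideanSpace ℝ (Fin d),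
      ENNReal.ofReal (((d' : ℝ) / (d' + 1)) ^ d') * μH[(d' : ℝ)] K
        ≤ μH[(d' : ℝ)] {x ∈ K | ⟪c, Rv⟫ ≤ ⟪x, Rv⟫} := by
    intro Rv
    set w : EuclideanSpace ℝ (Fin d') := L (E.orthogonalProjectionOnto Rv) with hw
    have hip : ∀ y, ⟪g y, Rv⟫ = ⟪p₀, Rv⟫ + ⟪w, y⟫ := by
      intro y
      have h0 : ⟪Rv - ((E.orthogonalProjectionOnto Rv : E) : EuclideanSpace ℝ (Fin d)),
          ((L.symm y : E) : EuclideanSpace ℝ (Fin d))⟫ = 0 :=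
        E.starProjection_inner_eq_zero Rv _ (L.symm y).2
      have h3 := inner_sub_left (𝕜 := ℝ) Rv ((E.orthogonalProjectionOnto Rv : E) : EuclideanSpace ℝ (Fin d))
        ((L.symm y : E) : EuclideanSpace ℝ (Fin d))
      have h2 : ⟪((L.symm y : E) : EuclideanSpace ℝ (Fin d)), Rv⟫ = ⟪w, y⟫ := by
        rw [real_inner_comm]
        have h4 : ⟪Rv, ((L.symm y : E) : EuclideanSpace ℝ (Fin d))⟫
            = ⟪((E.orthogonalProjectionOnto Rv : E) : EuclideanSpace ℝ (Fin d)),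
              ((L.symm y : E) : EuclideanSpace ℝ (Fin d))⟫ := by linarith [h0, h3]
        rw [h4, ← Submodule.coe_inner, ← LinearIsometryEquiv.inner_map_map L,
          LinearIsometryEquiv.apply_symm_apply]
      calc ⟪g y, Rv⟫ = ⟪p₀, Rv⟫ + ⟪((L.symm y : E) : EuclideanSpace ℝ (Fin d)), Rv⟫ :=
            inner_add_left _ _ _
        _ = ⟪p₀, Rv⟫ + ⟪w, y⟫ := by rw [h2]
    have hpre : P ∩ g ⁻¹' {x | ⟪c, Rv⟫ ≤ ⟪x, Rv⟫} = P ∩ {y | 0 ≤ ⟪w, y - c'⟫} := by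
      ext y
      simp only [Set.mem_inter_iff, Set.mem_preimage, Set.mem_setOf_eq, and_congr_right_iff]
      intro _
      rw [← hgc, hip, hip, inner_sub_right]
      constructor <;> intro h <;> linarith
    have hset : {x ∈ K | ⟪c, Rv⟫ ≤ ⟪x, Rv⟫} = K ∩ {x | ⟪c, Rv⟫ ≤ ⟪x, Rv⟫} := rfl
    rw [hset, hmap, hpre, hμHK, mul_left_comm]
    apply mul_le_mul_right
    by_cases hw0 : w = 0
    · have huniv : {y | 0 ≤ ⟪w, y - c'⟫} = Set.univ := by
        ext y; simp [hw0, inner_zero_left]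
      rw [huniv, Set.inter_univ]
      calc ENNReal.ofReal (((d' : ℝ) / (d' + 1)) ^ d') * volume P ≤ 1 * volume P :=
            mul_le_mul_left hq1 _
        _ = volume P := one_mul _
    · exact hGrun P hPcomp hPconv hPint w hw0 c' hc'def
  refine ⟨fun i => key (R i), fun i => ?_, hexp⟩
  have hsetneg : {x ∈ K | ⟪x, R i⟫ ≤ ⟪c, R i⟫} = {x ∈ K | ⟪c, -(R i)⟫ ≤ ⟪x, -(R i)⟫} := by
    ext x
    simp only [Set.mem_setOf_eq, inner_neg_right, and_congr_right_iff]
    intro _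
    constructor <;> intro <;> linarith
  rw [hsetneg]
  exact key (-(R i))
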